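/- Let ε > 0, let C : [0, ∞) → Set(ℝ³) be a time-varying safe set, and for each time t ≥ 0 let h_ε(·, t) : ℝ³ → ℝ characterize the buffered safe set: C(t) ⊖ B_ε = {y ∈ ℝ³ : h_ε(y, t) ≥ 0}. Let S(t) ⊆ ℝ³ and let y₁(t), …, y_N(t) ∈ S(t) satisfy the coverage condition at resolution ε at every time t ≥ 0. Suppose for each i ∈ {1, …, N} there is α_i > 0 such that the map t ↦ h_ε(yᵢ(t), t) is differentiable with derivative at least −α_i · h_ε(yᵢ(t), t) for all t ≥ 0, and h_ε(yᵢ(0), 0) ≥ 0. Then S(t) ⊆ C(t) for all t ≥ 0. -/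

import Mathlib

lemma comparison_nonneg {f f' : ℝ → ℝ} {α : ℝ} (hα : 0 < α)
    (hf : ∀ t : ℝ, 0 ≤ t → HasDerivWithinAt f (f' t) (Set.Ici 0) t)
    (hineq : ∀ t : ℝ, 0 ≤ t → -α * f t ≤ f' t)
    (h0 : 0 ≤ f 0) : ∀ t : ℝ, 0 ≤ t → 0 ≤ f t := by
  set F : ℝ → ℝ := fun t => Real.exp (α * t) * f t with hF
  have hFderiv : ∀ t : ℝ, 0 ≤ t →
      HasDerivWithinAt F (Real.exp (α * t) * (α * f t + f' t)) (Set.Ici 0) t := by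
    intro t ht
    have h1 : HasDerivWithinAt (fun s => Real.exp (α * s)) (α * Real.exp (α * t))
        (Set.Ici 0) t := by
      have := (Real.hasDerivAt_exp (α * t)).comp t ((hasDerivAt_id t).const_mul α)
      simpa [mul_comm, Function.comp_def] using this.hasDerivWithinAt
    have := h1.mul (hf t ht)
    exact this.congr_deriv (by ring)
  have hmono : MonotoneOn F (Set.Ici 0) := by
    apply monotoneOn_of_hasDerivWithinAt_nonneg (convex_Ici 0)
      (f' := fun t => Real.exp (α * t) * (α * f t + f' t))
    · intro x hx; exact (hFderiv x hx).continuousWithinAt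
    · intro x hx
      rw [interior_Ici] at hx ⊢
      exact (hFderiv x (le_of_lt hx)).mono Set.Ioi_subset_Ici_self
    · intro x hx
      rw [interior_Ici] at hx
      have hx' := le_of_lt (Set.mem_Ioi.mp hx)
      have : 0 ≤ α * f x + f' x := by
        have := hineq x hx'
        linarith
      positivity
  intro t ht
  have := hmono (Set.self_mem_Ici) ht ht
  have hF0 : F 0 = f 0 := by simp [hF]
  have hFt : 0 ≤ F t := by rw [hF0] at this; linarith
  have hexp : 0 < Real.exp (α * t) := Real.exp_pos _
  exact nonneg_of_mul_nonneg_right (by simpa [hF, mul_comm] using hFt) hexp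

/-- The Pontryagin difference of a set `C ⊆ ℝ³` with the open `ε`-ball centered at the
origin. -/
def pontryaginDiff (C : Set (EuclideanSpace ℝ (Fin 3))) (ε : ℝ) :
    Set (EuclideanSpace ℝ (Fin 3)) :=
  {x | ∀ b : EuclideanSpace ℝ (Fin 3), ‖b‖ < ε → x + b ∈ C}

/-- Combining the comparison lemma for each sampled barrier constraint with the
full-body collision avoidance theorem: if `h_ε(·, t)` characterizes the buffered safe
set `C(t) ⊖ B_ε` as its 0-superlevel set, the sample points cover the robot surface at
resolution `ε`, and along each sample point the barrier satisfies the CBF comparison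
inequality with initial value `h_ε(yᵢ(0), 0) ≥ 0`, then the full robot surface stays
in the safe set `C(t)` for all `t ≥ 0`. -/
theorem full_body_safety_from_CBF
    (ε : ℝ) (hε : 0 < ε) (N : ℕ)
    (C S : ℝ → Set (EuclideanSpace ℝ (Fin 3)))
    (hEps : EuclideanSpace ℝ (Fin 3) → ℝ → ℝ)
    (hchar : ∀ t : ℝ, 0 ≤ t →
      pontryaginDiff (C t) ε = {p : EuclideanSpace ℝ (Fin 3) | 0 ≤ hEps p t})
    (y : Fin N → ℝ → EuclideanSpace ℝ (Fin 3))
    (hmem : ∀ t : ℝ, 0 ≤ t → ∀ i : Fin N, y i t ∈ S t)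
    (hcov : ∀ t : ℝ, 0 ≤ t → ∀ p ∈ S t, ∃ i : Fin N, ‖p - y i t‖ < ε)
    (α : Fin N → ℝ) (hα : ∀ i, 0 < α i)
    (g' : Fin N → ℝ → ℝ)
    (hdiff : ∀ i : Fin N, ∀ t : ℝ, 0 ≤ t →
      HasDerivWithinAt (fun s => hEps (y i s) s) (g' i t) (Set.Ici 0) t)
    (hineq : ∀ i : Fin N, ∀ t : ℝ, 0 ≤ t → -α i * hEps (y i t) t ≤ g' i t)
    (h0 : ∀ i : Fin N, 0 ≤ hEps (y i 0) 0) :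
    ∀ t : ℝ, 0 ≤ t → S t ⊆ C t := by
  intro t ht p hp
  obtain ⟨i, hi⟩ := hcov t ht p hp
  have hnn : 0 ≤ hEps (y i t) t :=
    comparison_nonneg (hα i) (hdiff i) (hineq i) (h0 i) t ht
  have hmemP : y i t ∈ pontryaginDiff (C t) ε := by
    rw [hchar t ht]; exact hnn
  have := hmemP (p - y i t) hi
  simpa using this
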